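/- (Theorem 1(e)) For x = 1101 as well as for x = 1110, the number of triples (S_1,S_2,S_3) of pairwise disjoint subsets of {1,…,n} that are words of type x equals ρ_2^{−2}; moreover every such word has aliasing index |V(x)| = ρ_2 and length m + X = l_4 + 3. -/

import Mathlib

open Real Finset

noncomputable section

/-- The trigonometric argument π/4 + (π/2)·t. -/
def trigArg (t : ℝ) : ℝ := Real.pi / 4 + Real.pi / 2 * t

/-- The dot product a'w = Σ_j a_j w_j as a real number. -/
def dotR {n : ℕ} (a w : Fin n → Fin 4) : ℝ :=
  ∑ j, ((a j : ℕ) : ℝ) * ((w j : ℕ) : ℝ)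

/-- ψ(a), depending on the pairwise disjoint subsets S₁, S₂, S₃. -/
def psi {n : ℕ} (S1 S2 S3 : Finset (Fin n)) (a : Fin n → Fin 4) : ℝ :=
  (∏ j ∈ S1, (Real.sin (trigArg ((a j : ℕ) : ℝ)) * Real.cos (trigArg ((a j : ℕ) : ℝ)))) *
  (∏ j ∈ S2, Real.cos (trigArg ((a j : ℕ) : ℝ))) *
  (∏ j ∈ S3, Real.sin (trigArg ((a j : ℕ) : ℝ)))

/-- φ(x; a) for a binary 4-tuple x = x₁x₂x₃x₄. -/
def phi {n : ℕ} (u v : Fin n → Fin 4) (S1 S2 S3 : Finset (Fin n))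
    (x1 x2 x3 x4 : ℕ) (a : Fin n → Fin 4) : ℝ :=
  (2 : ℝ) ^ (((2 * S1.card + S2.card + S3.card + (x1 + x2 + x3 + x4) : ℕ) : ℝ) / 2
      - 2 * (n : ℝ)) *
    Real.sin (trigArg (dotR a u)) ^ x1 * Real.cos (trigArg (dotR a u)) ^ x2 *
    Real.sin (trigArg (dotR a v)) ^ x3 * Real.cos (trigArg (dotR a v)) ^ x4 *
    psi S1 S2 S3 a

/-- V(x) = Σ_{a ∈ {0,1,2,3}ⁿ} φ(x; a). -/
def Vval {n : ℕ} (u v : Fin n → Fin 4) (S1 S2 S3 : Finset (Fin n))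
    (x1 x2 x3 x4 : ℕ) : ℝ :=
  ∑ a : Fin n → Fin 4, phi u v S1 S2 S3 x1 x2 x3 x4 a

/-- S₁, S₂, S₃ are pairwise disjoint. -/
def PairwiseDisj {n : ℕ} (S1 S2 S3 : Finset (Fin n)) : Prop :=
  Disjoint S1 S2 ∧ Disjoint S1 S3 ∧ Disjoint S2 S3

/-- (S₁,S₂,S₃) is a word of type x = x₁x₂x₃x₄. -/
def IsWord {n : ℕ} (u v : Fin n → Fin 4) (S1 S2 S3 : Finset (Fin n))
    (x1 x2 x3 x4 : ℕ) : Prop :=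
  PairwiseDisj S1 S2 S3 ∧ Vval u v S1 S2 S3 x1 x2 x3 x4 ≠ 0

/-- The length m + X of a word. -/
def wordLength {n : ℕ} (S1 S2 S3 : Finset (Fin n)) (x1 x2 x3 x4 : ℕ) : ℕ :=
  2 * S1.card + S2.card + S3.card + (x1 + x2 + x3 + x4)

/-- The set of words of type x = x₁x₂x₃x₄. -/
def wordSet {n : ℕ} (u v : Fin n → Fin 4) (x1 x2 x3 x4 : ℕ) :
    Set (Finset (Fin n) × Finset (Fin n) × Finset (Fin n)) :=
  {t | IsWord u v t.1 t.2.1 t.2.2 x1 x2 x3 x4}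

/-- The set of words of type x = x₁x₂x₃x₄ having length L. -/
def wordSetLen {n : ℕ} (u v : Fin n → Fin 4) (x1 x2 x3 x4 L : ℕ) :
    Set (Finset (Fin n) × Finset (Fin n) × Finset (Fin n)) :=
  {t | IsWord u v t.1 t.2.1 t.2.2 x1 x2 x3 x4 ∧
       wordLength t.1 t.2.1 t.2.2 x1 x2 x3 x4 = L}

/-- f_{ks} = #{j : u_j = k, v_j = s}. -/
def freq {n : ℕ} (u v : Fin n → Fin 4) (k s : Fin 4) : ℕ :=
  (Finset.univ.filter (fun j => u j = k ∧ v j = s)).card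

def lam1 {n : ℕ} (u v : Fin n → Fin 4) : ℕ := freq u v 1 0 + freq u v 3 0
def lam2 {n : ℕ} (u v : Fin n → Fin 4) : ℕ := freq u v 0 1 + freq u v 0 3
def lam3 {n : ℕ} (u v : Fin n → Fin 4) : ℕ := freq u v 1 2 + freq u v 3 2
def lam4 {n : ℕ} (u v : Fin n → Fin 4) : ℕ := freq u v 2 1 + freq u v 2 3
def lam5 {n : ℕ} (u v : Fin n → Fin 4) : ℕ := freq u v 1 1 + freq u v 3 3
def lam6 {n : ℕ} (u v : Fin n → Fin 4) : ℕ := freq u v 1 3 + freq u v 3 1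
def lam7 {n : ℕ} (u v : Fin n → Fin 4) : ℕ := freq u v 0 2
def lam8 {n : ℕ} (u v : Fin n → Fin 4) : ℕ := freq u v 2 0
def lam9 {n : ℕ} (u v : Fin n → Fin 4) : ℕ := freq u v 2 2
def lam10 {n : ℕ} (u v : Fin n → Fin 4) : ℕ := freq u v 0 0

def len1 {n : ℕ} (u v : Fin n → Fin 4) : ℕ :=
  2 * (lam4 u v + lam8 u v + lam9 u v) + lam1 u v + lam3 u v + lam5 u v + lam6 u v
def len2 {n : ℕ} (u v : Fin n → Fin 4) : ℕ :=
  2 * (lam3 u v + lam7 u v + lam9 u v) + lam2 u v + lam4 u v + lam5 u v + lam6 u v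
def len3 {n : ℕ} (u v : Fin n → Fin 4) : ℕ :=
  2 * (lam2 u v + lam8 u v + lam9 u v) + lam1 u v + lam3 u v + lam5 u v + lam6 u v
def len4 {n : ℕ} (u v : Fin n → Fin 4) : ℕ :=
  2 * (lam1 u v + lam7 u v + lam9 u v) + lam2 u v + lam4 u v + lam5 u v + lam6 u v
def len5 {n : ℕ} (u v : Fin n → Fin 4) : ℕ :=
  2 * (lam1 u v + lam3 u v + lam5 u v + lam6 u v)
def len6 {n : ℕ} (u v : Fin n → Fin 4) : ℕ :=
  2 * (lam2 u v + lam4 u v + lam5 u v + lam6 u v)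
def len7 {n : ℕ} (u v : Fin n → Fin 4) : ℕ :=
  2 * (lam1 u v + lam2 u v + lam3 u v + lam4 u v)
def len8 {n : ℕ} (u v : Fin n → Fin 4) : ℕ :=
  2 * (lam7 u v + lam8 u v) + lam1 u v + lam2 u v + lam3 u v + lam4 u v
def len9 {n : ℕ} (u v : Fin n → Fin 4) : ℕ :=
  2 * (lam5 u v + lam7 u v + lam8 u v) + lam1 u v + lam2 u v + lam3 u v + lam4 u v
def len10 {n : ℕ} (u v : Fin n → Fin 4) : ℕ :=
  2 * (lam6 u v + lam7 u v + lam8 u v) + lam1 u v + lam2 u v + lam3 u v + lam4 u v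

/-- ρ₁ = 2^{−⌊(λ₁+λ₃+λ₅+λ₆)/2⌋}. -/
def rho1 {n : ℕ} (u v : Fin n → Fin 4) : ℝ :=
  ((2 : ℝ) ^ ((lam1 u v + lam3 u v + lam5 u v + lam6 u v) / 2))⁻¹
/-- ρ₂ = 2^{−⌊(λ₂+λ₄+λ₅+λ₆)/2⌋}. -/
def rho2 {n : ℕ} (u v : Fin n → Fin 4) : ℝ :=
  ((2 : ℝ) ^ ((lam2 u v + lam4 u v + lam5 u v + lam6 u v) / 2))⁻¹
/-- ξ₁ = 2^{−⌊(λ₁+λ₃)/2⌋}. -/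
def xi1 {n : ℕ} (u v : Fin n → Fin 4) : ℝ :=
  ((2 : ℝ) ^ ((lam1 u v + lam3 u v) / 2))⁻¹
/-- ξ₂ = 2^{−⌊(λ₂+λ₄)/2⌋}. -/
def xi2 {n : ℕ} (u v : Fin n → Fin 4) : ℝ :=
  ((2 : ℝ) ^ ((lam2 u v + lam4 u v) / 2))⁻¹
/-- ξ = 2^{−⌊(λ₁+λ₂+λ₃+λ₄+1)/2⌋}. -/
def xival {n : ℕ} (u v : Fin n → Fin 4) : ℝ :=
  ((2 : ℝ) ^ ((lam1 u v + lam2 u v + lam3 u v + lam4 u v + 1) / 2))⁻¹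

namespace T1E

noncomputable def ζ : ℂ := Complex.exp ((Real.pi/4 : ℝ) * Complex.I)

lemma zeta_pow_nat (k : ℕ) : ζ ^ k = Complex.exp ((Real.pi/4*k : ℝ) * Complex.I) := by
  rw [ζ, ← Complex.exp_nat_mul]
  congr 1
  push_cast
  ring

lemma zeta_pow_re (k : ℕ) : (ζ ^ k).re = Real.cos (Real.pi/4*k) := by
  rw [zeta_pow_nat, Complex.exp_ofReal_mul_I_re]

lemma zeta_val : ζ = ((Real.sqrt 2/2 : ℝ) : ℂ) + ((Real.sqrt 2/2 : ℝ) : ℂ)*Complex.I := by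
  rw [ζ, Complex.exp_mul_I, ← Complex.ofReal_cos, ← Complex.ofReal_sin,
    Real.cos_pi_div_four, Real.sin_pi_div_four]

lemma exp_pi_div_two_I : Complex.exp ((Real.pi/2 : ℝ) * Complex.I) = Complex.I := by
  rw [Complex.exp_mul_I, ← Complex.ofReal_cos, ← Complex.ofReal_sin,
    Real.cos_pi_div_two, Real.sin_pi_div_two]
  simp

lemma exp_half_pi_nat (k : ℕ) : Complex.exp ((Real.pi/2*k : ℝ) * Complex.I) = Complex.I ^ k := by
  rw [show ((Real.pi/2*k : ℝ) : ℂ) * Complex.I = (k:ℂ) * (((Real.pi/2 : ℝ):ℂ) * Complex.I) by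
    push_cast; ring, Complex.exp_nat_mul, exp_pi_div_two_I]

lemma zeta_sq : ζ^2 = Complex.I := by
  have h : (Real.pi/4*((2:ℕ):ℝ) : ℝ) = Real.pi/2 := by push_cast; ring
  rw [zeta_pow_nat, h, exp_pi_div_two_I]

lemma zeta_pow7 : ζ^7 = -Complex.I * ζ := by
  rw [show ζ^7 = (ζ^2)^3*ζ by ring, zeta_sq]
  rw [show Complex.I^3 = Complex.I^2 * Complex.I by ring, Complex.I_sq]
  ring

lemma zeta_pow8 : ζ^8 = 1 := by
  rw [show ζ^8 = (ζ^2)^4 by ring, zeta_sq]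
  simp [show Complex.I^4 = (Complex.I^2)^2 by ring, Complex.I_sq]

lemma zeta_ne_zero : ζ ≠ 0 := Complex.exp_ne_zero _

lemma zeta_mul_exp (t : ℝ) : ζ * Complex.exp ((Real.pi/2*t : ℝ) * Complex.I)
    = Complex.exp (((trigArg t : ℝ) : ℂ) * Complex.I) := by
  rw [ζ, ← Complex.exp_add]
  congr 1
  unfold trigArg
  push_cast
  ring

lemma cos_trig_eq (t : ℝ) :
    Real.cos (trigArg t) = (ζ * Complex.exp ((Real.pi/2*t : ℝ) * Complex.I)).re := by
  rw [zeta_mul_exp, Complex.exp_ofReal_mul_I_re]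

lemma sin_trig_eq (t : ℝ) :
    Real.sin (trigArg t) = (ζ^7 * Complex.exp ((Real.pi/2*t : ℝ) * Complex.I)).re := by
  rw [zeta_pow7, mul_assoc, zeta_mul_exp]
  rw [show Real.sin (trigArg t) = (Complex.exp ((↑(trigArg t) : ℂ) * Complex.I)).im from
    (Complex.exp_ofReal_mul_I_im _).symm]
  simp [Complex.mul_re]

lemma sincos (t : ℝ) : Real.sin (trigArg t) * Real.cos (trigArg t) = Real.cos (Real.pi * t)/2 := by
  have h := Real.sin_two_mul (trigArg t)
  have h2 : 2 * trigArg t = Real.pi * t + Real.pi/2 := by unfold trigArg; ring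
  rw [h2, Real.sin_add_pi_div_two] at h
  linarith

lemma cos_pi_nat (k : ℕ) : Real.cos (Real.pi * k) = (-1)^k := by
  induction k with
  | zero => simp
  | succ m ih =>
    push_cast
    rw [mul_add, mul_one, Real.cos_add_pi, ih, pow_succ]
    ring


example (p q a : Fin 4) : True := by trivial

lemma Ipow (k : ℕ) : Complex.I ^ k = Complex.I ^ (k % 4) := by
  conv_lhs => rw [← Nat.div_add_mod k 4, pow_add, pow_mul, Complex.I_pow_four, one_pow, one_mul]

def zval : Fin 4 → ℂ := ![1, -1, Complex.I, -Complex.I]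

def zc : Fin 4 → Fin 4 → Fin 4 :=
  ![![0,2,1,3],![1,3,0,2],![0,2,1,3],![1,3,0,2]]

lemma pow_pow_eq (p q a : Fin 4) :
    (-1:ℂ)^((a:ℕ)*(p:ℕ)) * Complex.I^((a:ℕ)*(q:ℕ)) = zval (zc p q) ^ (a:ℕ) := by
  fin_cases p <;> fin_cases q <;> fin_cases a <;>
    norm_num [zc, zval, Ipow, pow_succ, Complex.I_sq] <;>
    simp [Ipow, pow_succ]

lemma ct0 : Real.cos (trigArg 0) = Real.sqrt 2/2 := by
  rw [show trigArg 0 = Real.pi/4 by unfold trigArg; ring, Real.cos_pi_div_four]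
lemma st0 : Real.sin (trigArg 0) = Real.sqrt 2/2 := by
  rw [show trigArg 0 = Real.pi/4 by unfold trigArg; ring, Real.sin_pi_div_four]
lemma ct1 : Real.cos (trigArg 1) = -(Real.sqrt 2/2) := by
  rw [show trigArg 1 = Real.pi/4 + Real.pi/2 by unfold trigArg; ring,
    Real.cos_add_pi_div_two, Real.sin_pi_div_four]
lemma st1 : Real.sin (trigArg 1) = Real.sqrt 2/2 := by
  rw [show trigArg 1 = Real.pi/4 + Real.pi/2 by unfold trigArg; ring,
    Real.sin_add_pi_div_two, Real.cos_pi_div_four]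
lemma ct2 : Real.cos (trigArg 2) = -(Real.sqrt 2/2) := by
  rw [show trigArg 2 = Real.pi/4 + Real.pi by unfold trigArg; ring,
    Real.cos_add_pi, Real.cos_pi_div_four]
lemma st2 : Real.sin (trigArg 2) = -(Real.sqrt 2/2) := by
  rw [show trigArg 2 = Real.pi/4 + Real.pi by unfold trigArg; ring,
    Real.sin_add_pi, Real.sin_pi_div_four]
lemma ct3 : Real.cos (trigArg 3) = Real.sqrt 2/2 := by
  rw [show trigArg 3 = (Real.pi/4 + Real.pi) + Real.pi/2 by unfold trigArg; ring,
    Real.cos_add_pi_div_two, Real.sin_add_pi, Real.sin_pi_div_four]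
  ring
lemma st3 : Real.sin (trigArg 3) = -(Real.sqrt 2/2) := by
  rw [show trigArg 3 = (Real.pi/4 + Real.pi) + Real.pi/2 by unfold trigArg; ring,
    Real.sin_add_pi_div_two, Real.cos_add_pi, Real.cos_pi_div_four]


noncomputable def psiF : Fin 4 → Fin 4 → ℝ
  | 0, _ => 1
  | 1, a => Real.sin (trigArg ((a:ℕ):ℝ)) * Real.cos (trigArg ((a:ℕ):ℝ))
  | 2, a => Real.cos (trigArg ((a:ℕ):ℝ))
  | 3, a => Real.sin (trigArg ((a:ℕ):ℝ))

noncomputable def psiTab : Fin 4 → Fin 4 → ℝ :=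
  ![![1,1,1,1], ![1/2,-(1/2),1/2,-(1/2)],
    ![Real.sqrt 2/2,-(Real.sqrt 2/2),-(Real.sqrt 2/2),Real.sqrt 2/2],
    ![Real.sqrt 2/2,Real.sqrt 2/2,-(Real.sqrt 2/2),-(Real.sqrt 2/2)]]

lemma psiF_eval (s a : Fin 4) : psiF s a = psiTab s a := by
  fin_cases s <;> fin_cases a <;>
    norm_num [psiF, psiTab, sincos, cos_pi_nat, ct0, ct1, ct2, ct3, st0, st1, st2, st3] <;>
    rw [div_mul_div_comm, Real.mul_self_sqrt (by norm_num : (0:ℝ) ≤ 2)] <;> norm_num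

noncomputable def zpowTab : Fin 4 → Fin 4 → ℂ :=
  ![![1,1,1,1],![1,-1,1,-1],![1,Complex.I,-1,-Complex.I],![1,-Complex.I,-1,Complex.I]]

lemma zval_pow (z a : Fin 4) : zval z ^ (a:ℕ) = zpowTab z a := by
  fin_cases z <;> fin_cases a <;>
    norm_num [zval, zpowTab, pow_succ, Complex.I_mul_I] <;> ring_nf <;>
    simp [Complex.I_sq] <;> ring

noncomputable def Lfun (p q s : Fin 4) : ℂ :=
  ∑ a : Fin 4, (-1:ℂ)^((a:ℕ)*(p:ℕ)) * Complex.I^((a:ℕ)*(q:ℕ)) * ((psiF s a : ℝ) : ℂ)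

lemma Lfun_eq_sum (p q s : Fin 4) :
    Lfun p q s = ∑ a : Fin 4, zpowTab (zc p q) a * ((psiTab s a : ℝ):ℂ) :=
  Finset.sum_congr rfl fun a _ => by rw [pow_pow_eq, zval_pow, psiF_eval]

def okTab : Fin 4 → Fin 4 → Bool :=
  ![![true,false,false,false],![false,true,false,false],
    ![false,false,true,true],![false,false,true,true]]

def okc (z s : Fin 4) : Prop := okTab z s = true

instance okc_dec : ∀ z s, Decidable (okc z s) := fun z s => by unfold okc; infer_instance

def epow : Fin 4 → ℕ := ![2,1,1,1]

def tpow : Fin 4 → Fin 4 → ℕ :=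
  ![![0,0,0,0],![0,0,0,0],![0,0,7,1],![0,0,1,7]]

noncomputable def LC : Fin 4 → Fin 4 → ℂ :=
  ![![4,0,0,0],![0,2,0,0],
    ![0,0,((Real.sqrt 2:ℝ):ℂ)*(1-Complex.I),((Real.sqrt 2:ℝ):ℂ)*(1+Complex.I)],
    ![0,0,((Real.sqrt 2:ℝ):ℂ)*(1+Complex.I),((Real.sqrt 2:ℝ):ℂ)*(1-Complex.I)]]

set_option maxHeartbeats 2000000 in
lemma Lfun_eval (p q s : Fin 4) : Lfun p q s = LC (zc p q) s := by
  rw [Lfun_eq_sum]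
  fin_cases p <;> fin_cases q <;> fin_cases s <;>
    norm_num [zc, LC, zpowTab, psiTab, Fin.sum_univ_four, Matrix.vecHead, Matrix.vecTail] <;>
    push_cast <;> ring

lemma sqrt2_mul_add : ((Real.sqrt 2:ℝ):ℂ)*(1+Complex.I) = 2*ζ := by
  rw [zeta_val]; push_cast; ring

lemma sqrt2_mul_sub : ((Real.sqrt 2:ℝ):ℂ)*(1-Complex.I) = 2*ζ^7 := by
  have h7 : ζ^7 = ((Real.sqrt 2/2 :ℝ):ℂ) - ((Real.sqrt 2/2:ℝ):ℂ)*Complex.I := by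
    rw [zeta_pow7, zeta_val]
    linear_combination (-((Real.sqrt 2/2:ℝ):ℂ)) * Complex.I_sq
  rw [h7]; push_cast; ring

lemma LC_pow (z s : Fin 4) (h : okc z s) : LC z s = (2:ℂ)^(epow s) * ζ^(tpow z s) := by
  fin_cases z <;> fin_cases s <;> simp only [okc, okTab] at h <;>
    first
    | (exfalso; revert h; decide)
    | (norm_num [LC, epow, tpow, sqrt2_mul_add, sqrt2_mul_sub, Matrix.vecHead, Matrix.vecTail])

lemma LC_ne_zero (z s : Fin 4) (h : okc z s) : LC z s ≠ 0 := by
  rw [LC_pow z s h]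
  exact mul_ne_zero (pow_ne_zero _ two_ne_zero) (pow_ne_zero _ zeta_ne_zero)

lemma LC_zero (z s : Fin 4) (h : ¬ okc z s) : LC z s = 0 := by
  fin_cases z <;> fin_cases s <;> simp only [okc, okTab] at h <;>
    first
    | (exfalso; exact h (by decide))
    | (norm_num [LC, Matrix.vecHead, Matrix.vecTail])


variable {n : ℕ}

def code (S1 S2 S3 : Finset (Fin n)) (j : Fin n) : Fin 4 :=
  if j ∈ S1 then 1 else if j ∈ S2 then 2 else if j ∈ S3 then 3 else 0

lemma psi_prod {S1 S2 S3 : Finset (Fin n)} (h : PairwiseDisj S1 S2 S3) (a : Fin n → Fin 4) :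
    psi S1 S2 S3 a = ∏ j, psiF (code S1 S2 S3 j) (a j) := by
  obtain ⟨h12, h13, h23⟩ := h
  have key : ∀ j, psiF (code S1 S2 S3 j) (a j) =
      (if j ∈ S1 then Real.sin (trigArg ((a j:ℕ):ℝ)) * Real.cos (trigArg ((a j:ℕ):ℝ)) else 1) *
      ((if j ∈ S2 then Real.cos (trigArg ((a j:ℕ):ℝ)) else 1) *
       (if j ∈ S3 then Real.sin (trigArg ((a j:ℕ):ℝ)) else 1)) := by
    intro j
    by_cases h1 : j ∈ S1
    · have h2 : j ∉ S2 := Finset.disjoint_left.mp h12 h1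
      have h3 : j ∉ S3 := Finset.disjoint_left.mp h13 h1
      simp [code, h1, h2, h3, psiF]
    · by_cases h2 : j ∈ S2
      · have h3 : j ∉ S3 := Finset.disjoint_left.mp h23 h2
        simp [code, h1, h2, h3, psiF]
      · by_cases h3 : j ∈ S3
        · simp [code, h1, h2, h3, psiF]
        · simp [code, h1, h2, h3, psiF]
  rw [Finset.prod_congr rfl (fun j _ => key j), Finset.prod_mul_distrib,
    Finset.prod_mul_distrib, Finset.prod_ite_mem, Finset.prod_ite_mem, Finset.prod_ite_mem,
    Finset.univ_inter, Finset.univ_inter, Finset.univ_inter]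
  unfold psi
  ring

lemma V_eq (u v : Fin n → Fin 4) {S1 S2 S3 : Finset (Fin n)} (h : PairwiseDisj S1 S2 S3)
    (x3 x4 w0 : ℕ) (hx : x3 = 0 ∧ x4 = 1 ∧ w0 = 1 ∨ x3 = 1 ∧ x4 = 0 ∧ w0 = 7) :
    Vval u v S1 S2 S3 1 1 x3 x4 =
      (2:ℝ)^(((2*S1.card + S2.card + S3.card + 3:ℕ):ℝ)/2 - 2*(n:ℝ)) / 2 *
        (ζ^w0 * ∏ j, Lfun (u j) (v j) (code S1 S2 S3 j)).re := by
  set g : Fin n → Fin 4 → ℂ := fun j b =>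
    (-1:ℂ)^((b:ℕ)*((u j):ℕ)) * Complex.I^((b:ℕ)*((v j):ℕ)) *
      ((psiF (code S1 S2 S3 j) b : ℝ):ℂ) with hg
  have hphi : ∀ a : Fin n → Fin 4, phi u v S1 S2 S3 1 1 x3 x4 a =
      (2:ℝ)^(((2*S1.card + S2.card + S3.card + 3:ℕ):ℝ)/2 - 2*(n:ℝ)) / 2 *
        (ζ^w0 * ∏ j, g j (a j)).re := by
    intro a
    set Nu := ∑ j, (a j:ℕ)*((u j):ℕ) with hNudef
    set Nv := ∑ j, (a j:ℕ)*((v j):ℕ) with hNvdef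
    have hNu : dotR a u = ((Nu:ℕ):ℝ) := by
      rw [hNudef]; unfold dotR; push_cast; ring
    have hNv : dotR a v = ((Nv:ℕ):ℝ) := by
      rw [hNvdef]; unfold dotR; push_cast; ring
    have hprod : ∏ j, g j (a j) =
        ((-1:ℂ))^Nu * Complex.I^Nv * ((psi S1 S2 S3 a : ℝ):ℂ) := by
      rw [psi_prod ⟨h.1, h.2.1, h.2.2⟩ a, hg, hNudef, hNvdef]
      rw [Finset.prod_mul_distrib, Finset.prod_mul_distrib,
        Finset.prod_pow_eq_pow_sum, Finset.prod_pow_eq_pow_sum, Complex.ofReal_prod]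
    have hkey : ∀ w : ℕ, (ζ^w * ∏ j, g j (a j)).re =
        ((-1:ℝ))^Nu * psi S1 S2 S3 a * (ζ^w * Complex.I^Nv).re := by
      intro w
      rw [hprod, show ζ^w * ((-1:ℂ)^Nu * Complex.I^Nv * ((psi S1 S2 S3 a :ℝ):ℂ)) =
        ((((((-1:ℝ))^Nu * psi S1 S2 S3 a :ℝ)):ℂ) * (ζ^w * Complex.I^Nv)) by push_cast; ring,
        Complex.re_ofReal_mul]
    have hsc : Real.sin (trigArg ((Nu:ℕ):ℝ)) * Real.cos (trigArg ((Nu:ℕ):ℝ))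
        = ((-1:ℝ))^Nu / 2 := by rw [sincos, cos_pi_nat]
    rcases hx with ⟨e3,e4,ew⟩|⟨e3,e4,ew⟩ <;> subst e3 <;> subst e4 <;> subst ew
    · have hcv : Real.cos (trigArg ((Nv:ℕ):ℝ)) = (ζ * Complex.I^Nv).re := by
        rw [cos_trig_eq, exp_half_pi_nat]
      unfold phi
      rw [pow_one, pow_one, pow_zero, pow_one, hNu, hNv,
        show (1+1+0+1 : ℕ) = 3 by norm_num, hkey 1, pow_one]
      linear_combination
        (Real.cos (trigArg ((Nv:ℕ):ℝ)) * psi S1 S2 S3 a *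
          (2:ℝ)^(((2*S1.card + S2.card + S3.card + 3:ℕ):ℝ)/2 - 2*(n:ℝ))) * hsc +
        (((-1:ℝ))^Nu * psi S1 S2 S3 a *
          (2:ℝ)^(((2*S1.card + S2.card + S3.card + 3:ℕ):ℝ)/2 - 2*(n:ℝ)) / 2) * hcv
    · have hsv : Real.sin (trigArg ((Nv:ℕ):ℝ)) = (ζ^7 * Complex.I^Nv).re := by
        rw [sin_trig_eq, exp_half_pi_nat]
      unfold phi
      rw [pow_one, pow_one, pow_one, pow_zero, hNu, hNv,
        show (1+1+1+0 : ℕ) = 3 by norm_num, hkey 7]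
      linear_combination
        (Real.sin (trigArg ((Nv:ℕ):ℝ)) * psi S1 S2 S3 a *
          (2:ℝ)^(((2*S1.card + S2.card + S3.card + 3:ℕ):ℝ)/2 - 2*(n:ℝ))) * hsc +
        (((-1:ℝ))^Nu * psi S1 S2 S3 a *
          (2:ℝ)^(((2*S1.card + S2.card + S3.card + 3:ℕ):ℝ)/2 - 2*(n:ℝ)) / 2) * hsv
  unfold Vval
  rw [Finset.sum_congr rfl (fun a _ => hphi a), ← Finset.mul_sum, ← Complex.re_sum,
    ← Finset.mul_sum]
  congr 2
  rw [← Fintype.piFinset_univ, Finset.sum_prod_piFinset]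
  rfl

variable (u v : Fin n → Fin 4)

def Aset : Finset (Fin n) := univ.filter (fun j => zc (u j) (v j) = 0)
def Bset : Finset (Fin n) := univ.filter (fun j => zc (u j) (v j) = 1)
def Cset : Finset (Fin n) := univ.filter (fun j => zc (u j) (v j) = 2 ∨ zc (u j) (v j) = 3)
def Z3set : Finset (Fin n) := univ.filter (fun j => zc (u j) (v j) = 3)

lemma sum_pair_aux (P : Fin 4 → Fin 4 → Prop) [∀ p q, Decidable (P p q)] (c d : Fin 4) :
    (∑ p : Fin 4, ∑ q : Fin 4, if P p q then (if c = p ∧ d = q then (1:ℕ) else 0) else 0)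
      = if P c d then 1 else 0 := by
  fin_cases c <;> fin_cases d <;> simp [Fin.sum_univ_four]

lemma filter_pair_card (P : Fin 4 → Fin 4 → Prop) [∀ p q, Decidable (P p q)] :
    (univ.filter (fun j => P (u j) (v j))).card
      = ∑ p : Fin 4, ∑ q : Fin 4, if P p q then freq u v p q else 0 := by
  rw [Finset.card_filter]
  have hfr : ∀ p q : Fin 4, freq u v p q = ∑ j, if u j = p ∧ v j = q then 1 else 0 := by
    intro p q; rw [freq, Finset.card_filter]
  calc ∑ j, (if P (u j) (v j) then (1:ℕ) else 0)
      = ∑ j, ∑ p : Fin 4, ∑ q : Fin 4, if P p q then (if u j = p ∧ v j = q then (1:ℕ) else 0) else 0 := by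
        exact Finset.sum_congr rfl fun j _ => (sum_pair_aux P (u j) (v j)).symm
    _ = ∑ p : Fin 4, ∑ q : Fin 4, if P p q then freq u v p q else 0 := by
        rw [Finset.sum_comm]
        refine Finset.sum_congr rfl fun p _ => ?_
        rw [Finset.sum_comm]
        refine Finset.sum_congr rfl fun q _ => ?_
        rw [hfr p q]
        split <;> simp

lemma Bset_card : (Bset u v).card = lam1 u v + lam7 u v + lam9 u v := by
  rw [Bset, filter_pair_card u v (fun p q => zc p q = 1)]
  norm_num [Fin.sum_univ_four, zc, Matrix.vecHead, Matrix.vecTail, lam1, lam7, lam9, Matrix.cons_val_two, Matrix.cons_val_three,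
    show ((0:Fin 4) = 1) = False from by decide, show ((2:Fin 4) = 1) = False from by decide,
    show ((3:Fin 4) = 1) = False from by decide]
  omega

lemma Cset_card : (Cset u v).card = lam2 u v + lam4 u v + lam5 u v + lam6 u v := by
  rw [Cset, filter_pair_card u v (fun p q => zc p q = 2 ∨ zc p q = 3)]
  norm_num [Fin.sum_univ_four, zc, Matrix.vecHead, Matrix.vecTail, lam2, lam4, lam5, lam6, Matrix.cons_val_two, Matrix.cons_val_three,
    show ((0:Fin 4) = 2) = False from by decide, show ((0:Fin 4) = 3) = False from by decide,
    show ((1:Fin 4) = 2) = False from by decide, show ((1:Fin 4) = 3) = False from by decide]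
  omega

lemma card_split : (Aset u v).card + (Bset u v).card + (Cset u v).card = n := by
  have key : ∀ z : Fin 4, (if z = 0 then (1:ℕ) else 0) + (if z = 1 then 1 else 0)
      + (if z = 2 ∨ z = 3 then 1 else 0) = 1 := by decide
  rw [Aset, Bset, Cset, Finset.card_filter, Finset.card_filter, Finset.card_filter,
    ← Finset.sum_add_distrib, ← Finset.sum_add_distrib]
  rw [Finset.sum_congr rfl fun j _ => key (zc (u j) (v j))]
  simp

def Valid (S1 S2 S3 : Finset (Fin n)) : Prop :=
  ∀ j, okc (zc (u j) (v j)) (code S1 S2 S3 j)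

def Tsum (S1 S2 S3 : Finset (Fin n)) : ℕ :=
  ∑ j, tpow (zc (u j) (v j)) (code S1 S2 S3 j)

lemma code_one_iff {S1 S2 S3 : Finset (Fin n)} (j : Fin n) :
    code S1 S2 S3 j = 1 ↔ j ∈ S1 := by
  by_cases h1 : j ∈ S1 <;> by_cases h2 : j ∈ S2 <;> by_cases h3 : j ∈ S3 <;>
    simp [code, h1, h2, h3]

lemma code_two_iff {S1 S2 S3 : Finset (Fin n)} (h : PairwiseDisj S1 S2 S3) (j : Fin n) :
    code S1 S2 S3 j = 2 ↔ j ∈ S2 := by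
  have h1 : j ∈ S2 → j ∉ S1 := fun hh => Finset.disjoint_right.mp h.1 hh
  by_cases h1' : j ∈ S1 <;> by_cases h2 : j ∈ S2 <;> by_cases h3 : j ∈ S3 <;>
    simp [code, h1', h2, h3] <;> first | (exact absurd h1' (h1 h2)) | skip
lemma code_three_iff {S1 S2 S3 : Finset (Fin n)} (h : PairwiseDisj S1 S2 S3) (j : Fin n) :
    code S1 S2 S3 j = 3 ↔ j ∈ S3 := by
  have h1 : j ∈ S3 → j ∉ S1 := fun hh => Finset.disjoint_right.mp h.2.1 hh
  have h2' : j ∈ S3 → j ∉ S2 := fun hh => Finset.disjoint_right.mp h.2.2 hh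
  by_cases h1' : j ∈ S1 <;> by_cases h2 : j ∈ S2 <;> by_cases h3 : j ∈ S3 <;>
    simp [code, h1', h2, h3] <;>
    first | (exact absurd h1' (h1 h3)) | (exact absurd h2 (h2' h3)) | skip
lemma code_zero_iff {S1 S2 S3 : Finset (Fin n)} (j : Fin n) :
    code S1 S2 S3 j = 0 ↔ (j ∉ S1 ∧ j ∉ S2 ∧ j ∉ S3) := by
  by_cases h1 : j ∈ S1 <;> by_cases h2 : j ∈ S2 <;> by_cases h3 : j ∈ S3 <;>
    simp [code, h1, h2, h3]

lemma valid_S1 {S1 S2 S3 : Finset (Fin n)} (hval : Valid u v S1 S2 S3) : S1 = Bset u v := by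
  ext j
  have hj := hval j
  rw [← code_one_iff (S2 := S2) (S3 := S3), Bset, Finset.mem_filter]
  have : okc (zc (u j) (v j)) (code S1 S2 S3 j) →
      (code S1 S2 S3 j = 1 ↔ zc (u j) (v j) = 1) := by
    revert hj
    generalize zc (u j) (v j) = z
    generalize code S1 S2 S3 j = s
    revert z s; decide
  simp [this hj]

lemma valid_union {S1 S2 S3 : Finset (Fin n)} (h : PairwiseDisj S1 S2 S3)
    (hval : Valid u v S1 S2 S3) : S2 ∪ S3 = Cset u v := by
  ext j
  have hj := hval j
  rw [Finset.mem_union, ← code_two_iff h j, ← code_three_iff h j, Cset, Finset.mem_filter]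
  have : okc (zc (u j) (v j)) (code S1 S2 S3 j) →
      ((code S1 S2 S3 j = 2 ∨ code S1 S2 S3 j = 3) ↔
        (zc (u j) (v j) = 2 ∨ zc (u j) (v j) = 3)) := by
    revert hj
    generalize zc (u j) (v j) = z
    generalize code S1 S2 S3 j = s
    revert z s; decide
  simp [this hj]

lemma valid_E {S1 S2 S3 : Finset (Fin n)} (hval : Valid u v S1 S2 S3) :
    ∑ j, epow (code S1 S2 S3 j) = n + (Aset u v).card := by
  have h1 : ∀ s : Fin 4, epow s = 1 + if s = 0 then 1 else 0 := by decide
  rw [Finset.sum_congr rfl (fun j _ => h1 (code S1 S2 S3 j)), Finset.sum_add_distrib]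
  have h2 : ∀ j : Fin n, (code S1 S2 S3 j = 0) = (zc (u j) (v j) = 0) := by
    intro j
    have hj := hval j
    have : okc (zc (u j) (v j)) (code S1 S2 S3 j) →
        (code S1 S2 S3 j = 0 ↔ zc (u j) (v j) = 0) := by
      revert hj
      generalize zc (u j) (v j) = z
      generalize code S1 S2 S3 j = s
      revert z s; decide
    exact propext (this hj)
  simp only [h2]
  rw [Finset.sum_boole]
  simp [Aset]

lemma V_formula {S1 S2 S3 : Finset (Fin n)} (h : PairwiseDisj S1 S2 S3)
    (hval : Valid u v S1 S2 S3) (x3 x4 w0 : ℕ)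
    (hx : x3 = 0 ∧ x4 = 1 ∧ w0 = 1 ∨ x3 = 1 ∧ x4 = 0 ∧ w0 = 7) :
    Vval u v S1 S2 S3 1 1 x3 x4
      = (2:ℝ)^((1 - ((Cset u v).card:ℝ))/2) *
          Real.cos (Real.pi/4 * ((w0 + Tsum u v S1 S2 S3 : ℕ):ℝ)) := by
  rw [V_eq u v h x3 x4 w0 hx]
  have hL : ∀ j : Fin n, Lfun (u j) (v j) (code S1 S2 S3 j)
      = (2:ℂ)^(epow (code S1 S2 S3 j)) * ζ^(tpow (zc (u j) (v j)) (code S1 S2 S3 j)) :=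
    fun j => by rw [Lfun_eval, LC_pow _ _ (hval j)]
  rw [Finset.prod_congr rfl (fun j _ => hL j), Finset.prod_mul_distrib,
    Finset.prod_pow_eq_pow_sum, Finset.prod_pow_eq_pow_sum]
  rw [show (∑ j, tpow (zc (u j) (v j)) (code S1 S2 S3 j)) = Tsum u v S1 S2 S3 from rfl]
  set E := ∑ j, epow (code S1 S2 S3 j) with hE
  set T := Tsum u v S1 S2 S3 with hT
  have hsplit : (ζ^w0 * ((2:ℂ)^E * ζ^T)) = ((((2:ℝ)^E :ℝ)):ℂ) * ζ^(w0+T) := by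
    push_cast
    ring
  rw [hsplit, Complex.re_ofReal_mul, zeta_pow_re]
  have hb : ((S1.card : ℝ)) = ((Bset u v).card : ℝ) := by
    exact_mod_cast congrArg (fun (s : Finset (Fin n)) => ((s.card : ℝ))) (valid_S1 u v hval)
  have hc : ((S2.card : ℝ)) + ((S3.card : ℝ)) = ((Cset u v).card : ℝ) := by
    have := valid_union u v h hval
    have hcard : S2.card + S3.card = (Cset u v).card := by
      rw [← this, Finset.card_union_of_disjoint h.2.2]
    exact_mod_cast hcard
  have hEv : (E : ℝ) = (n : ℝ) + ((Aset u v).card : ℝ) := by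
    exact_mod_cast valid_E u v hval
  have hnr : ((Aset u v).card : ℝ) + ((Bset u v).card : ℝ) + ((Cset u v).card : ℝ) = (n:ℝ) := by
    exact_mod_cast card_split u v
  have hcoef : (2:ℝ)^(((2*S1.card + S2.card + S3.card + 3:ℕ):ℝ)/2 - 2*(n:ℝ)) / 2 * (2:ℝ)^(E:ℕ)
      = (2:ℝ)^((1 - ((Cset u v).card:ℝ))/2) := by
    rw [← Real.rpow_natCast 2 E, div_eq_mul_inv, ← Real.rpow_neg_one (2:ℝ),
      ← Real.rpow_add (by norm_num : (0:ℝ) < 2), ← Real.rpow_add (by norm_num : (0:ℝ) < 2)]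
    congr 1
    push_cast
    push_cast at hb hc hEv hnr
    linarith
  linear_combination Real.cos (Real.pi/4 * ((w0 + T : ℕ):ℝ)) * hcoef

noncomputable def costab : ℕ → ℝ := fun r =>
  if r = 0 then 1 else if r = 1 then Real.sqrt 2/2 else if r = 2 then 0
  else if r = 3 then -(Real.sqrt 2/2) else if r = 4 then -1
  else if r = 5 then -(Real.sqrt 2/2) else if r = 6 then 0 else Real.sqrt 2/2

lemma cos_pi4_mod (k : ℕ) : Real.cos (Real.pi/4*k) = costab (k % 8) := by
  have key : ∀ r : ℕ, r < 8 → Real.cos (Real.pi/4*r) = costab r := by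
    intro r hr
    interval_cases r
    · norm_num [costab]
    · rw [show (Real.pi/4*((1:ℕ):ℝ)) = Real.pi/4 by push_cast; ring, Real.cos_pi_div_four]
      norm_num [costab]
    · rw [show (Real.pi/4*((2:ℕ):ℝ)) = Real.pi/2 by push_cast; ring, Real.cos_pi_div_two]
      norm_num [costab]
    · rw [show (Real.pi/4*((3:ℕ):ℝ)) = Real.pi - Real.pi/4 by push_cast; ring,
        Real.cos_pi_sub, Real.cos_pi_div_four]
      norm_num [costab]
    · rw [show (Real.pi/4*((4:ℕ):ℝ)) = Real.pi by push_cast; ring, Real.cos_pi]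
      norm_num [costab]
    · rw [show (Real.pi/4*((5:ℕ):ℝ)) = Real.pi/4 + Real.pi by push_cast; ring,
        Real.cos_add_pi, Real.cos_pi_div_four]
      norm_num [costab]
    · rw [show (Real.pi/4*((6:ℕ):ℝ)) = Real.pi/2 + Real.pi by push_cast; ring,
        Real.cos_add_pi, Real.cos_pi_div_two]
      norm_num [costab]
    · rw [show (Real.pi/4*((7:ℕ):ℝ)) = (Real.pi - Real.pi/4) + Real.pi by push_cast; ring,
        Real.cos_add_pi, Real.cos_pi_sub, Real.cos_pi_div_four]
      norm_num [costab]
  obtain ⟨q, r, hr, rfl⟩ : ∃ q r, r < 8 ∧ k = 8*q + r :=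
    ⟨k/8, k%8, Nat.mod_lt _ (by norm_num), (Nat.div_add_mod k 8).symm⟩
  rw [show (Real.pi/4*((8*q + r : ℕ):ℝ)) = Real.pi/4*((r:ℕ):ℝ) + ((q:ℤ):ℝ)*(2*Real.pi) by
    push_cast; ring]
  rw [Real.cos_add_int_mul_two_pi]
  rw [show (8*q + r) % 8 = r by omega]
  exact key r hr

lemma sqrt2half_pos : (0:ℝ) < Real.sqrt 2/2 := by positivity

lemma cos_pi4_odd_abs (k : ℕ) (hk : k % 2 = 1) :
    |Real.cos (Real.pi/4*k)| = Real.sqrt 2/2 := by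
  rw [cos_pi4_mod]
  have h8 : k % 8 < 8 := Nat.mod_lt _ (by norm_num)
  have h2 : k % 8 % 2 = 1 := by omega
  generalize k % 8 = r at h8 h2
  have hs := sqrt2half_pos
  interval_cases r <;> first | omega | (norm_num [costab] <;> positivity)
lemma cos_pi4_odd_ne (k : ℕ) (hk : k % 2 = 1) : Real.cos (Real.pi/4*k) ≠ 0 := by
  intro h
  have := cos_pi4_odd_abs k hk
  rw [h, abs_zero] at this
  exact absurd this.symm (ne_of_gt sqrt2half_pos)

lemma cos_pi4_even_iff (k : ℕ) (hk : k % 2 = 0) :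
    Real.cos (Real.pi/4*k) ≠ 0 ↔ k % 4 = 0 := by
  rw [cos_pi4_mod]
  have h8 : k % 8 < 8 := Nat.mod_lt _ (by norm_num)
  have h2 : k % 8 % 2 = 0 := by omega
  have h4 : k % 4 = k % 8 % 4 := by omega
  rw [h4]
  generalize k % 8 = r at h8 h2 ⊢
  interval_cases r <;> norm_num [costab] <;> omega
lemma cos_pi4_even_abs (k : ℕ) (hk : k % 4 = 0) : |Real.cos (Real.pi/4*k)| = 1 := by
  rw [cos_pi4_mod]
  have h8 : k % 8 < 8 := Nat.mod_lt _ (by norm_num)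
  have h2 : k % 8 % 4 = 0 := by omega
  generalize k % 8 = r at h8 h2
  interval_cases r <;> first | omega | norm_num [costab]

lemma T_parity {S1 S2 S3 : Finset (Fin n)} (hval : Valid u v S1 S2 S3) :
    (Tsum u v S1 S2 S3) % 2 = (Cset u v).card % 2 := by
  have hd : ∀ z s : Fin 4, okc z s →
      tpow z s % 2 = if (z = 2 ∨ z = 3) then 1 else 0 := by decide
  rw [Tsum, Finset.sum_nat_mod]
  rw [Finset.sum_congr rfl (fun j _ => hd _ _ (hval j))]
  rw [Cset, Finset.card_filter]

lemma V_zero_of_not_valid {S1 S2 S3 : Finset (Fin n)} (h : PairwiseDisj S1 S2 S3)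
    (hnv : ¬ Valid u v S1 S2 S3) (x3 x4 w0 : ℕ)
    (hx : x3 = 0 ∧ x4 = 1 ∧ w0 = 1 ∨ x3 = 1 ∧ x4 = 0 ∧ w0 = 7) :
    Vval u v S1 S2 S3 1 1 x3 x4 = 0 := by
  rw [V_eq u v h x3 x4 w0 hx]
  unfold Valid at hnv
  push_neg at hnv
  obtain ⟨j, hj⟩ := hnv
  have hz : Lfun (u j) (v j) (code S1 S2 S3 j) = 0 := by
    rw [Lfun_eval]; exact LC_zero _ _ hj
  rw [Finset.prod_eq_zero (Finset.mem_univ j) hz]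
  simp

lemma disjoint_BC : Disjoint (Bset u v) (Cset u v) := by
  rw [Finset.disjoint_left]
  intro j hj1 hj2
  simp only [Bset, Cset, Finset.mem_filter, Finset.mem_univ, true_and] at hj1 hj2
  rcases hj2 with h | h <;> rw [hj1] at h <;> exact absurd h (by decide)

lemma triple_valid (D : Finset (Fin n)) (hD : D ⊆ Cset u v) :
    PairwiseDisj (Bset u v) D (Cset u v \ D) ∧ Valid u v (Bset u v) D (Cset u v \ D) := by
  have hBC := disjoint_BC u v
  have hd : PairwiseDisj (Bset u v) D (Cset u v \ D) :=
    ⟨hBC.mono_right hD, hBC.mono_right (Finset.sdiff_subset), Finset.disjoint_sdiff⟩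
  refine ⟨hd, fun j => ?_⟩
  by_cases h1 : j ∈ Bset u v
  · have hc1 : code (Bset u v) D (Cset u v \ D) j = 1 := by simp [code, h1]
    have hz : zc (u j) (v j) = 1 := by
      simpa [Bset] using h1
    rw [hc1, hz]; decide
  · by_cases h2 : j ∈ D
    · have hc : code (Bset u v) D (Cset u v \ D) j = 2 := by simp [code, h1, h2]
      have hz : zc (u j) (v j) = 2 ∨ zc (u j) (v j) = 3 := by
        have := hD h2
        simpa [Cset] using this
      rw [hc]; rcases hz with h | h <;> rw [h] <;> decide
    · by_cases h3 : j ∈ Cset u v \ D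
      · have hc : code (Bset u v) D (Cset u v \ D) j = 3 := by simp [code, h1, h2, h3]
        have hz : zc (u j) (v j) = 2 ∨ zc (u j) (v j) = 3 := by
          have := (Finset.mem_sdiff.mp h3).1
          simpa [Cset] using this
        rw [hc]; rcases hz with h | h <;> rw [h] <;> decide
      · have hc : code (Bset u v) D (Cset u v \ D) j = 0 := by simp [code, h1, h2, h3]
        have hnC : j ∉ Cset u v := fun hj => h3 (Finset.mem_sdiff.mpr ⟨hj, h2⟩)
        have hz1 : zc (u j) (v j) ≠ 1 := fun hh => h1 (by simp [Bset, hh])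
        have hz23 : ¬ (zc (u j) (v j) = 2 ∨ zc (u j) (v j) = 3) := fun hh =>
          hnC (by simp [Cset, hh])
        have hz0 : zc (u j) (v j) = 0 := by
          revert hz1 hz23
          generalize zc (u j) (v j) = z
          revert z; decide
        rw [hc, hz0]; decide

lemma word_char {S1 S2 S3 : Finset (Fin n)} (x3 x4 w0 : ℕ)
    (hx : x3 = 0 ∧ x4 = 1 ∧ w0 = 1 ∨ x3 = 1 ∧ x4 = 0 ∧ w0 = 7) :
    IsWord u v S1 S2 S3 1 1 x3 x4 ↔
      (S1 = Bset u v ∧ S2 ⊆ Cset u v ∧ S3 = Cset u v \ S2 ∧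
        Real.cos (Real.pi/4 * ((w0 + Tsum u v S1 S2 S3 : ℕ):ℝ)) ≠ 0) := by
  constructor
  · rintro ⟨hdisj, hV⟩
    have hval : Valid u v S1 S2 S3 := by
      by_contra hnv
      exact hV (V_zero_of_not_valid u v hdisj hnv x3 x4 w0 hx)
    have h1 := valid_S1 u v hval
    have h23 := valid_union u v hdisj hval
    have h2 : S2 ⊆ Cset u v := h23 ▸ Finset.subset_union_left
    have h3 : S3 = Cset u v \ S2 := by
      rw [← h23, Finset.union_sdiff_cancel_left hdisj.2.2]
    refine ⟨h1, h2, h3, fun hc => hV ?_⟩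
    rw [V_formula u v hdisj hval x3 x4 w0 hx, hc, mul_zero]
  · rintro ⟨h1, h2, h3, hcos⟩
    obtain ⟨hdisj, hval⟩ : PairwiseDisj S1 S2 S3 ∧ Valid u v S1 S2 S3 := by
      rw [h1, h3]
      exact triple_valid u v S2 h2
    refine ⟨hdisj, ?_⟩
    rw [V_formula u v hdisj hval x3 x4 w0 hx]
    exact mul_ne_zero (ne_of_gt (Real.rpow_pos_of_pos (by norm_num) _)) hcos

lemma Tsum_decomp (D : Finset (Fin n)) (hD : D ⊆ Cset u v) :
    Tsum u v (Bset u v) D (Cset u v \ D)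
      = (Cset u v).card
        + 6 * (univ.filter (fun j => j ∈ D ∧ zc (u j) (v j) = 2)).card
        + 6 * (univ.filter (fun j => j ∈ (Cset u v \ D) ∧ zc (u j) (v j) = 3)).card := by
  have hterm : ∀ j : Fin n, tpow (zc (u j) (v j)) (code (Bset u v) D (Cset u v \ D) j)
      = (if j ∈ Cset u v then 1 else 0)
        + 6 * (if j ∈ D ∧ zc (u j) (v j) = 2 then 1 else 0)
        + 6 * (if j ∈ (Cset u v \ D) ∧ zc (u j) (v j) = 3 then 1 else 0) := by
    intro j
    by_cases h1 : j ∈ Bset u v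
    · have hz : zc (u j) (v j) = 1 := by simpa [Bset] using h1
      have hnC : j ∉ Cset u v := Finset.disjoint_left.mp (disjoint_BC u v) h1
      have hc : code (Bset u v) D (Cset u v \ D) j = 1 := by simp [code, h1]
      rw [hc, hz]
      have : tpow 1 1 = 0 := rfl
      simp [hnC, hz, this]
    · by_cases h2 : j ∈ D
      · have hc : code (Bset u v) D (Cset u v \ D) j = 2 := by simp [code, h1, h2]
        have hC : j ∈ Cset u v := hD h2
        have hnsd : j ∉ Cset u v \ D := fun hh => (Finset.mem_sdiff.mp hh).2 h2
        have hz : zc (u j) (v j) = 2 ∨ zc (u j) (v j) = 3 := by simpa [Cset] using hC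
        rw [hc]
        rcases hz with h | h <;> rw [h] <;> simp [hC, h2, hnsd] <;> rfl
      · by_cases h3 : j ∈ Cset u v \ D
        · have hc : code (Bset u v) D (Cset u v \ D) j = 3 := by simp [code, h1, h2, h3]
          have hC : j ∈ Cset u v := (Finset.mem_sdiff.mp h3).1
          have hz : zc (u j) (v j) = 2 ∨ zc (u j) (v j) = 3 := by simpa [Cset] using hC
          rw [hc]
          rcases hz with h | h <;> rw [h] <;> simp [hC, h2, h3] <;> rfl
        · have hc : code (Bset u v) D (Cset u v \ D) j = 0 := by simp [code, h1, h2, h3]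
          have hnC : j ∉ Cset u v := fun hj => h3 (Finset.mem_sdiff.mpr ⟨hj, h2⟩)
          rw [hc]
          have h0 : ∀ z : Fin 4, tpow z 0 = 0 := by decide
          simp [h0, hnC, h2, h3]
  have hcard : ∀ S : Finset (Fin n), (∑ j, if j ∈ S then (1:ℕ) else 0) = S.card := by
    intro S
    rw [Finset.sum_ite_mem, Finset.univ_inter, Finset.card_eq_sum_ones]
  rw [Tsum, Finset.sum_congr rfl (fun j _ => hterm j), Finset.sum_add_distrib,
    Finset.sum_add_distrib, ← Finset.mul_sum, ← Finset.mul_sum, hcard (Cset u v),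
    ← Finset.card_filter, ← Finset.card_filter]

lemma cond_even (heven : (Cset u v).card % 2 = 0) (w0 : ℕ) (hw : w0 = 1 ∨ w0 = 7)
    (D : Finset (Fin n)) (hD : D ⊆ Cset u v) :
    Real.cos (Real.pi/4 * ((w0 + Tsum u v (Bset u v) D (Cset u v \ D) : ℕ):ℝ)) ≠ 0 := by
  obtain ⟨hdisj, hval⟩ := triple_valid u v D hD
  have hT := T_parity u v hval
  exact cos_pi4_odd_ne _ (by omega)

lemma cond_iff (hodd : (Cset u v).card % 2 = 1) (w0 : ℕ) (hw : w0 = 1 ∨ w0 = 7)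
    (D : Finset (Fin n)) (hD : D ⊆ Cset u v) :
    (Real.cos (Real.pi/4 * ((w0 + Tsum u v (Bset u v) D (Cset u v \ D) : ℕ):ℝ)) ≠ 0)
      ↔ D.card % 2 = ((w0 + (Cset u v).card)/2 + (Z3set u v).card) % 2 := by
  have e1 := Tsum_decomp u v D hD
  have e2 : (univ.filter (fun j => j ∈ (Cset u v \ D) ∧ zc (u j) (v j) = 3)).card
      + (univ.filter (fun j => j ∈ D ∧ zc (u j) (v j) = 3)).card = (Z3set u v).card := by
    rw [Finset.card_filter, Finset.card_filter, Z3set, Finset.card_filter,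
      ← Finset.sum_add_distrib]
    refine Finset.sum_congr rfl fun j _ => ?_
    by_cases hz : zc (u j) (v j) = 3
    · have hC : j ∈ Cset u v := by simp [Cset, hz]
      by_cases hd : j ∈ D
      · have : j ∉ Cset u v \ D := fun hh => (Finset.mem_sdiff.mp hh).2 hd
        simp [hz, hd, this]
      · have : j ∈ Cset u v \ D := Finset.mem_sdiff.mpr ⟨hC, hd⟩
        simp [hz, hd, this]
    · simp [hz]
  have e3 : (univ.filter (fun j => j ∈ D ∧ zc (u j) (v j) = 2)).card
      + (univ.filter (fun j => j ∈ D ∧ zc (u j) (v j) = 3)).card = D.card := by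
    have hDeq : univ.filter (fun j => j ∈ D) = D := by ext j; simp
    rw [Finset.card_filter, Finset.card_filter, ← hDeq, Finset.card_filter,
      ← Finset.sum_add_distrib]
    refine Finset.sum_congr rfl fun j _ => ?_
    by_cases hd : j ∈ D
    · have hz : zc (u j) (v j) = 2 ∨ zc (u j) (v j) = 3 := by
        have := hD hd; simpa [Cset] using this
      rcases hz with h | h <;> rw [h] <;> simp [hd] <;> decide
    · simp [hd]
  have hT2 : (w0 + Tsum u v (Bset u v) D (Cset u v \ D)) % 2 = 0 := by omega
  rw [cos_pi4_even_iff _ hT2]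
  omega

lemma powerset_parity_card (C : Finset (Fin n)) (hne : 1 ≤ C.card) (c0 : ℕ) :
    ((C.powerset.filter (fun D => D.card % 2 = c0 % 2)).card) = 2^(C.card - 1) := by
  obtain ⟨a, ha⟩ := Finset.card_pos.mp hne
  have hflip : ∀ D, D ⊆ C → ((if a ∈ D then D.erase a else insert a D) ⊆ C ∧
      (if a ∈ D then D.erase a else insert a D).card % 2 = (D.card + 1) % 2) := by
    intro D hsub
    by_cases had : a ∈ D
    · rw [if_pos had]
      refine ⟨(Finset.erase_subset _ _).trans hsub, ?_⟩
      rw [Finset.card_erase_of_mem had]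
      have : 1 ≤ D.card := Finset.card_pos.mpr ⟨a, had⟩
      omega
    · rw [if_neg had]
      exact ⟨Finset.insert_subset ha hsub,
        by rw [Finset.card_insert_of_notMem had]⟩
  have hinv : ∀ D : Finset (Fin n),
      (if a ∈ (if a ∈ D then D.erase a else insert a D)
        then (if a ∈ D then D.erase a else insert a D).erase a
        else insert a (if a ∈ D then D.erase a else insert a D)) = D := by
    intro D
    by_cases had : a ∈ D
    · rw [if_pos had, if_neg (Finset.notMem_erase a D), Finset.insert_erase had]
    · rw [if_neg had, if_pos (Finset.mem_insert_self a D), Finset.erase_insert had]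
  have key : (C.powerset.filter (fun D => D.card % 2 = c0 % 2)).card
      = (C.powerset.filter (fun D => ¬ (D.card % 2 = c0 % 2))).card := by
    apply Finset.card_nbij' (i := fun D => if a ∈ D then D.erase a else insert a D)
      (j := fun D => if a ∈ D then D.erase a else insert a D)
    · intro D hDmem
      rw [Finset.mem_coe, Finset.mem_filter, Finset.mem_powerset] at hDmem
      rw [Finset.mem_coe, Finset.mem_filter, Finset.mem_powerset]
      beta_reduce
      obtain ⟨hsub, hpar⟩ := hDmem
      obtain ⟨hsub', hpar'⟩ := hflip D hsub
      exact ⟨hsub', by omega⟩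
    · intro D hDmem
      rw [Finset.mem_coe, Finset.mem_filter, Finset.mem_powerset] at hDmem
      rw [Finset.mem_coe, Finset.mem_filter, Finset.mem_powerset]
      beta_reduce
      obtain ⟨hsub, hpar⟩ := hDmem
      obtain ⟨hsub', hpar'⟩ := hflip D hsub
      exact ⟨hsub', by omega⟩
    · intro D _
      exact hinv D
    · intro D _
      exact hinv D
  have total := Finset.card_filter_add_card_filter_not
    (s := C.powerset) (p := fun D => D.card % 2 = c0 % 2)
  rw [Finset.card_powerset] at total
  have h2 : 2^C.card = 2^(C.card - 1) * 2 := by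
    rw [← pow_succ]
    congr 1
    omega
  omega

lemma rho2_eq : rho2 u v = ((2:ℝ)^(((Cset u v).card)/2))⁻¹ := by
  rw [rho2, ← Cset_card]

lemma pow_half_even (lam : ℕ) (h : lam % 2 = 0) :
    (2:ℝ)^((1 - (lam:ℝ))/2) * (Real.sqrt 2/2) = ((2:ℝ)^(lam/2))⁻¹ := by
  have h2 : (0:ℝ) < 2 := by norm_num
  obtain ⟨c, rfl⟩ : ∃ c, lam = 2*c := ⟨lam/2, by omega⟩
  rw [show (2*c)/2 = c by omega]
  rw [Real.sqrt_eq_rpow]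
  rw [show (2:ℝ)^((1 - ((2*c:ℕ):ℝ))/2) * ((2:ℝ)^(1/(2:ℝ)) / 2)
      = (2:ℝ)^((1 - ((2*c:ℕ):ℝ))/2 + 1/(2:ℝ) + (-1:ℝ)) by
    rw [Real.rpow_add h2, Real.rpow_add h2, Real.rpow_neg_one]; ring]
  rw [← Real.rpow_natCast 2 c, ← Real.rpow_neg h2.le]
  congr 1
  push_cast
  ring

lemma pow_half_odd (lam : ℕ) (h : lam % 2 = 1) :
    (2:ℝ)^((1 - (lam:ℝ))/2) = ((2:ℝ)^(lam/2))⁻¹ := by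
  have h2 : (0:ℝ) < 2 := by norm_num
  obtain ⟨c, rfl⟩ : ∃ c, lam = 2*c+1 := ⟨lam/2, by omega⟩
  rw [show (2*c+1)/2 = c by omega, ← Real.rpow_natCast 2 c, ← Real.rpow_neg h2.le]
  congr 1
  push_cast
  ring

lemma main_gen (x3 x4 w0 : ℕ)
    (hx : x3 = 0 ∧ x4 = 1 ∧ w0 = 1 ∨ x3 = 1 ∧ x4 = 0 ∧ w0 = 7) :
    ((wordSet u v 1 1 x3 x4).ncard : ℝ) = ((rho2 u v)⁻¹) ^ 2 ∧
    ∀ S1 S2 S3 : Finset (Fin n), IsWord u v S1 S2 S3 1 1 x3 x4 →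
      |Vval u v S1 S2 S3 1 1 x3 x4| = rho2 u v ∧
      wordLength S1 S2 S3 1 1 x3 x4 = len4 u v + 3 := by
  classical
  have hw : w0 = 1 ∨ w0 = 7 := by
    rcases hx with ⟨_,_,h⟩|⟨_,_,h⟩
    · exact Or.inl h
    · exact Or.inr h
  constructor
  · set lam := (Cset u v).card with hlam
    set W := ((Cset u v).powerset.filter
        (fun D => Real.cos (Real.pi/4 * ((w0 + Tsum u v (Bset u v) D (Cset u v \ D) : ℕ):ℝ)) ≠ 0)).image
        (fun D => (Bset u v, D, Cset u v \ D)) with hW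
    have hset : wordSet u v 1 1 x3 x4 = ↑W := by
      ext t
      obtain ⟨S1, S2, S3⟩ := t
      simp only [wordSet, Set.mem_setOf_eq, hW, Finset.coe_image, Set.mem_image,
        Finset.mem_coe, Finset.mem_filter, Finset.mem_powerset]
      rw [word_char u v x3 x4 w0 hx]
      constructor
      · rintro ⟨h1, h2, h3, hcos⟩
        refine ⟨S2, ⟨h2, ?_⟩, ?_⟩
        · rw [← h1, ← h3]
          exact hcos
        · rw [← h1, ← h3]
      · rintro ⟨D, ⟨hD, hcosD⟩, heq⟩
        rw [Prod.mk.injEq, Prod.mk.injEq] at heq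
        obtain ⟨e1, e2, e3⟩ := heq
        refine ⟨e1.symm, ?_, ?_, ?_⟩
        · rw [← e2]; exact hD
        · rw [← e3, e2]
        · rw [← e1, ← e2, ← e3]
          exact hcosD
    rw [hset, Set.ncard_coe_finset, hW]
    rw [Finset.card_image_of_injective _ (fun D1 D2 h => by
      simpa using congrArg (fun t : Finset (Fin n) × Finset (Fin n) × Finset (Fin n) => t.2.1) h)]
    have hpar : lam % 2 = 0 ∨ lam % 2 = 1 := by omega
    rcases hpar with hp | hp
    · rw [Finset.filter_true_of_mem
        (fun D hD => cond_even u v hp w0 hw D (Finset.mem_powerset.mp hD))]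
      rw [Finset.card_powerset, rho2_eq, inv_inv, ← pow_mul]
      push_cast
      congr 1
      omega
    · rw [Finset.filter_congr (fun D hD => by
        rw [cond_iff u v hp w0 hw D (Finset.mem_powerset.mp hD)])]
      rw [powerset_parity_card (Cset u v) (by omega) ((w0 + lam)/2 + (Z3set u v).card)]
      rw [rho2_eq, inv_inv, ← pow_mul]
      push_cast
      congr 1
      omega
  · intro S1 S2 S3 hword
    obtain ⟨hdisj, hV⟩ := hword
    have hval : Valid u v S1 S2 S3 := by
      by_contra hnv
      exact hV (V_zero_of_not_valid u v hdisj hnv x3 x4 w0 hx)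
    have hT := T_parity u v hval
    have hform := V_formula u v hdisj hval x3 x4 w0 hx
    set lam := (Cset u v).card with hlam
    constructor
    · rw [hform, abs_mul, abs_of_pos (Real.rpow_pos_of_pos (by norm_num) _)]
      have hpar : lam % 2 = 0 ∨ lam % 2 = 1 := by omega
      rcases hpar with hp | hp
      · rw [cos_pi4_odd_abs _ (by omega), rho2_eq]
        exact pow_half_even lam hp
      · have hk2 : (w0 + Tsum u v S1 S2 S3) % 2 = 0 := by omega
        have hcosne : Real.cos (Real.pi/4*((w0 + Tsum u v S1 S2 S3 :ℕ):ℝ)) ≠ 0 := by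
          intro hc
          exact hV (by rw [hform, hc, mul_zero])
        have hk4 := (cos_pi4_even_iff _ hk2).mp hcosne
        rw [cos_pi4_even_abs _ hk4, mul_one, rho2_eq]
        exact pow_half_odd lam hp
    · have h1 : S1.card = (Bset u v).card := by rw [valid_S1 u v hval]
      have h23 : S2.card + S3.card = lam := by
        have hu := valid_union u v hdisj hval
        rw [← Finset.card_union_of_disjoint hdisj.2.2, hu]
      have hx34 : x3 + x4 = 1 := by
        rcases hx with ⟨h3,h4,_⟩|⟨h3,h4,_⟩ <;> omega
      have hBc := Bset_card u v
      have hCc := Cset_card u v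
      rw [wordLength, len4]
      omega

end T1E

/-- Theorem 1(e): for x = 1101 and x = 1110 there are ρ₂⁻² words of type x; every
such word has aliasing index ρ₂ and length l₄ + 3. -/
theorem theorem1_e (n : ℕ) (hn : 1 ≤ n) (u v : Fin n → Fin 4)
    (x1 x2 x3 x4 : ℕ)
    (hx : (x1, x2, x3, x4) = (1, 1, 0, 1) ∨ (x1, x2, x3, x4) = (1, 1, 1, 0)) :
    ((wordSet u v x1 x2 x3 x4).ncard : ℝ) = ((rho2 u v)⁻¹) ^ 2 ∧
    ∀ S1 S2 S3 : Finset (Fin n), IsWord u v S1 S2 S3 x1 x2 x3 x4 →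
      |Vval u v S1 S2 S3 x1 x2 x3 x4| = rho2 u v ∧
      wordLength S1 S2 S3 x1 x2 x3 x4 = len4 u v + 3 := by
  rcases hx with h | h
  · rw [Prod.mk.injEq, Prod.mk.injEq, Prod.mk.injEq] at h
    obtain ⟨e1, e2, e3, e4⟩ := h
    subst e1; subst e2; subst e3; subst e4
    exact T1E.main_gen u v 0 1 1 (Or.inl ⟨rfl, rfl, rfl⟩)
  · rw [Prod.mk.injEq, Prod.mk.injEq, Prod.mk.injEq] at h
    obtain ⟨e1, e2, e3, e4⟩ := h
    subst e1; subst e2; subst e3; subst e4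
    exact T1E.main_gen u v 1 0 7 (Or.inr ⟨rfl, rfl, rfl⟩)
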